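/- arXiv:1608.08275 — 4 statements merged into one kernel-verified Lean document; each statement's English description precedes it below -/
import Mathlib

section
/- Let n ≥ 1 and K_1,…,K_{n+1} be positive real numbers, and let B be the n×n stiffness matrix built from them. Then det(B) = (∏_{j=1}^{n+1} K_j) · (∑_{i=1}^{n+1} 1/K_i); in particular det(B) > 0. -/
open Matrix

/-- The stiffness matrix of a spring-mass system with spring constants `K 0, …, K n`
(`n × n`, tridiagonal, with `B j j = K j + K (j+1)` and off-diagonal entries `-K (j+1)`). -/
noncomputable def stiffB (n : ℕ) (K : Fin (n + 1) → ℝ) : Matrix (Fin n) (Fin n) ℝ :=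
  Matrix.of fun i j =>
    if (i : ℕ) = (j : ℕ) then K i.castSucc + K i.succ
    else if (i : ℕ) + 1 = (j : ℕ) then -K i.succ
    else if (j : ℕ) + 1 = (i : ℕ) then -K j.succ
    else 0

lemma stiffB_eq_zero {n : ℕ} (K : Fin (n+1) → ℝ) {i j : Fin n}
    (h1 : (i : ℕ) ≠ (j : ℕ)) (h2 : (i : ℕ) + 1 ≠ (j : ℕ)) (h3 : (j : ℕ) + 1 ≠ (i : ℕ)) :
    stiffB n K i j = 0 := by
  simp only [stiffB, of_apply, if_neg h1, if_neg h2, if_neg h3]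

lemma stiffB_submatrix (n : ℕ) (K : Fin (n + 2) → ℝ) :
    (stiffB (n+1) K).submatrix Fin.succ Fin.succ = stiffB n (K ∘ Fin.succ) := by
  ext i j
  simp only [stiffB, submatrix_apply, of_apply, Fin.val_succ, Function.comp_apply,
    Nat.add_right_cancel_iff]
  split_ifs <;> rfl

lemma stiffB_det_aux : ∀ n : ℕ, ∀ K : Fin (n+1) → ℝ, (∀ j, 0 < K j) →
    (stiffB n K).det = (∏ j, K j) * (∑ i, (K i)⁻¹) := by
  intro n
  induction n using Nat.strong_induction_on with
  | _ n ih =>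
    match n with
    | 0 =>
      intro K hK
      simp [Matrix.det_fin_zero, Fin.prod_univ_one, Fin.sum_univ_one,
        mul_inv_cancel₀ (hK 0).ne']
    | 1 =>
      intro K hK
      rw [Matrix.det_fin_one]
      have h0 := (hK 0).ne'
      have h1 := (hK 1).ne'
      show K 0 + K 1 = _
      simp only [Fin.prod_univ_succ, Fin.sum_univ_succ, Fin.prod_univ_one, Fin.sum_univ_one,
        Fin.succ_zero_eq_one]
      field_simp; ring
    | (m+2) =>
      intro K hK
      rw [Matrix.det_succ_column_zero, Fin.sum_univ_succ, Fin.sum_univ_succ,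
        Finset.sum_eq_zero (fun i _ => by
          rw [stiffB_eq_zero K (by simp) (by simp) (by simp)]; ring), add_zero]
      -- first minor
      have hm0 : (stiffB (m+2) K).submatrix (Fin.succAbove 0) Fin.succ
          = stiffB (m+1) (K ∘ Fin.succ) := by
        rw [Fin.succAbove_zero]; exact stiffB_submatrix _ _
      -- second minor determinant
      have hsa : ∀ i : Fin m,
          (Fin.succ (0 : Fin (m+1))).succAbove i.succ = i.succ.succ := by
        intro i
        rw [Fin.succAbove_of_le_castSucc]
        simp [Fin.le_def]
      have hm1 : ((stiffB (m+2) K).submatrix (Fin.succ 0).succAbove Fin.succ).det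
          = -K 1 * (stiffB m (K ∘ Fin.succ ∘ Fin.succ)).det := by
        rw [Matrix.det_succ_row_zero, Fin.sum_univ_succ,
          Finset.sum_eq_zero (fun j _ => by
            rw [Matrix.submatrix_apply,
              stiffB_eq_zero K (by simp [Fin.succAbove, Fin.lt_def])
                (by simp [Fin.succAbove, Fin.lt_def])
                (by simp [Fin.succAbove, Fin.lt_def])]; ring), add_zero]
        have hsub : (((stiffB (m+2) K).submatrix (Fin.succ 0).succAbove Fin.succ).submatrix
            Fin.succ ((0 : Fin (m+1)).succAbove)) = stiffB m (K ∘ Fin.succ ∘ Fin.succ) := by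
          ext i j
          simp only [Matrix.submatrix_apply, Fin.succAbove_zero, hsa]
          have h1 := congrFun (congrFun (stiffB_submatrix (m+1) K) i.succ) j.succ
          simp only [Matrix.submatrix_apply] at h1
          rw [h1]
          have h2 := congrFun (congrFun (stiffB_submatrix m (K ∘ Fin.succ)) i) j
          simp only [Matrix.submatrix_apply] at h2
          rw [h2]
          rfl
        rw [hsub, Matrix.submatrix_apply]
        have e01 : (stiffB (m+2) K) ((Fin.succ (0 : Fin (m+1))).succAbove 0)
            (Fin.succ (0 : Fin (m+1))) = -K 1 := by
          simp [stiffB, Fin.succAbove, Fin.lt_def]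
          try rfl
        rw [e01]
        simp
      rw [hm0, hm1, ih (m+1) (by omega) (K ∘ Fin.succ) (fun j => hK _),
        ih m (by omega) (K ∘ Fin.succ ∘ Fin.succ) (fun j => hK _)]
      have e00 : (stiffB (m+2) K) 0 0 = K 0 + K 1 := by
        simp [stiffB]
        try rfl
      have e10 : (stiffB (m+2) K) (Fin.succ 0) 0 = -K 1 := by
        simp [stiffB]
        try rfl
      rw [e00, e10]
      simp only [Fin.prod_univ_succ, Fin.sum_univ_succ, Function.comp_apply,
        Fin.succ_zero_eq_one, Fin.val_zero, Fin.val_succ, pow_zero, pow_one]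
      have h0 := (hK 0).ne'
      have h1 := (hK 1).ne'
      field_simp
      simp only [Fin.val_one, pow_one]
      ring

/-- The determinant of the stiffness matrix built from positive spring constants
`K_1, …, K_{n+1}` equals `(∏ K_j) ⬝ (∑ 1/K_i)`; in particular it is positive. -/
theorem stiffB_det (n : ℕ) (hn : 1 ≤ n) (K : Fin (n + 1) → ℝ) (hK : ∀ j, 0 < K j) :
    (stiffB n K).det = (∏ j, K j) * (∑ i, (K i)⁻¹) ∧ 0 < (stiffB n K).det := by
  have h := stiffB_det_aux n K hK
  refine ⟨h, ?_⟩
  rw [h]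
  exact mul_pos (Finset.prod_pos fun j _ => hK j)
    (Finset.sum_pos (fun i _ => inv_pos.mpr (hK i)) Finset.univ_nonempty)
end

section
/- Let n ≥ 1, let H be an n×n real symmetric tridiagonal matrix that is positive definite and has all sub- and super-diagonal entries negative, and let α > 0 and β > 0. Then the unique solution g ∈ ℝ^n of the linear system H g = (α, 0, …, 0, β)ᵀ (where for n = 1 the right-hand side is (α + β)) has all entries strictly positive. -/
open Matrix

/-- A matrix is tridiagonal: entries vanish when the indices differ by more than one. -/
def IsTridiagonal {n : ℕ} (H : Matrix (Fin n) (Fin n) ℝ) : Prop :=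
  ∀ i j : Fin n, ((i : ℕ) + 1 < (j : ℕ) ∨ (j : ℕ) + 1 < (i : ℕ)) → H i j = 0

/-- If `H` is a real symmetric tridiagonal positive definite matrix with all sub- and
super-diagonal entries negative, and `α, β > 0`, then the (unique) solution `g` of
`H g = (α, 0, …, 0, β)ᵀ` (which reads `H g = (α + β)` when `n = 1`) has all entries
strictly positive. -/
theorem solution_of_boundary_system_pos
    (n : ℕ) (hn : 1 ≤ n) (H : Matrix (Fin n) (Fin n) ℝ)
    (hsym : H.IsSymm) (htri : IsTridiagonal H)
    (hneg : ∀ i j : Fin n, ((i : ℕ) + 1 = (j : ℕ) ∨ (j : ℕ) + 1 = (i : ℕ)) → H i j < 0)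
    (hpd : H.PosDef)
    (α β : ℝ) (hα : 0 < α) (hβ : 0 < β)
    (g : Fin n → ℝ)
    (hg : H.mulVec g = fun i : Fin n =>
      (if (i : ℕ) = 0 then α else 0) + (if (i : ℕ) = n - 1 then β else 0)) :
    ∀ i, 0 < g i := by
  set b : Fin n → ℝ := fun i : Fin n =>
      (if (i : ℕ) = 0 then α else 0) + (if (i : ℕ) = n - 1 then β else 0) with hbdef
  have hb0 : ∀ i, 0 ≤ b i := by
    intro i; simp only [hbdef]; split_ifs <;> linarith
  have hoff : ∀ i j : Fin n, i ≠ j → H i j ≤ 0 := by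
    intro i j hij
    rcases lt_trichotomy (i : ℕ) (j : ℕ) with h | h | h
    · rcases eq_or_lt_of_le (Nat.succ_le_of_lt h) with h' | h'
      · exact le_of_lt (hneg i j (Or.inl h'))
      · exact le_of_eq (htri i j (Or.inl h'))
    · exact absurd (Fin.ext h) hij
    · rcases eq_or_lt_of_le (Nat.succ_le_of_lt h) with h' | h'
      · exact le_of_lt (hneg i j (Or.inr h'))
      · exact le_of_eq (htri i j (Or.inr h'))
  -- Step 1: all entries of g are nonnegative.
  have hgnn : ∀ i, 0 ≤ g i := by
    by_contra hcon
    push_neg at hcon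
    obtain ⟨i0, hi0⟩ := hcon
    set y : Fin n → ℝ := fun i => min (g i) 0 with hy
    set z : Fin n → ℝ := fun i => max (g i) 0 with hz
    have hyz : y + z = g := by
      funext j; simp only [hy, hz, Pi.add_apply]
      rw [min_add_max]; ring
    have hyle : ∀ j, y j ≤ 0 := fun j => min_le_right _ _
    have hzge : ∀ j, 0 ≤ z j := fun j => le_max_right _ _
    have hyzz : ∀ j, y j * z j = 0 := by
      intro j
      rcases le_or_gt (g j) 0 with h | h
      · have : z j = 0 := max_eq_right h
        rw [this, mul_zero]
      · have : y j = 0 := min_eq_right h.le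
        rw [this, zero_mul]
    have hyne : y ≠ 0 := by
      intro h
      have := congrFun h i0
      simp only [hy, Pi.zero_apply] at this
      rw [min_eq_left hi0.le] at this
      exact absurd this (ne_of_lt hi0)
    have hquad := (Matrix.posDef_iff_dotProduct_mulVec.mp hpd).2 hyne
    simp only [star_trivial] at hquad
    have hmv : H.mulVec y = b - H.mulVec z := by
      have : H.mulVec (y + z) = b := by rw [hyz]; exact hg
      rw [Matrix.mulVec_add] at this
      funext j
      have := congrFun this j
      simp only [Pi.add_apply, Pi.sub_apply] at this ⊢
      linarith
    have h1 : y ⬝ᵥ b ≤ 0 := by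
      apply Finset.sum_nonpos
      intro j _
      exact mul_nonpos_of_nonpos_of_nonneg (hyle j) (hb0 j)
    have h2 : 0 ≤ y ⬝ᵥ H.mulVec z := by
      unfold dotProduct Matrix.mulVec dotProduct
      apply Finset.sum_nonneg
      intro i _
      rw [Finset.mul_sum]
      apply Finset.sum_nonneg
      intro j _
      rcases eq_or_ne i j with rfl | hij
      · have : y i * (H i i * z i) = H i i * (y i * z i) := by ring
        rw [this, hyzz i, mul_zero]
      · have := mul_nonpos_of_nonpos_of_nonneg (hoff i j hij) (hzge j)
        nlinarith [hyle i]
    have : y ⬝ᵥ H.mulVec y ≤ 0 := by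
      rw [hmv, dotProduct_sub]
      linarith
    linarith
  -- Step 2: no entry of g is zero.
  have key : ∀ m : ℕ, ∀ hm : m < n, g ⟨m, hm⟩ ≠ 0 := by
    intro m
    induction m with
    | zero =>
      intro hm h0
      have hsum : ∑ j, H ⟨0, hm⟩ j * g j = b ⟨0, hm⟩ := congrFun hg ⟨0, hm⟩
      have hle : ∑ j, H ⟨0, hm⟩ j * g j ≤ 0 := by
        apply Finset.sum_nonpos
        intro j _
        rcases eq_or_ne (⟨0, hm⟩ : Fin n) j with rfl | hij
        · rw [h0, mul_zero]
        · exact mul_nonpos_of_nonpos_of_nonneg (hoff _ j hij) (hgnn j)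
      have hbpos : 0 < b ⟨0, hm⟩ := by
        simp only [hbdef]
        split_ifs <;> simp_all <;> linarith
      linarith [hsum ▸ hle]
    | succ m ih =>
      intro hm h0
      have hmn : m < n := Nat.lt_of_succ_lt hm
      have hsum : ∑ j, H ⟨m + 1, hm⟩ j * g j = b ⟨m + 1, hm⟩ := congrFun hg ⟨m + 1, hm⟩
      have hle : ∀ j ∈ Finset.univ, H ⟨m + 1, hm⟩ j * g j ≤ 0 := by
        intro j _
        rcases eq_or_ne (⟨m + 1, hm⟩ : Fin n) j with rfl | hij
        · rw [h0, mul_zero]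
        · exact mul_nonpos_of_nonpos_of_nonneg (hoff _ j hij) (hgnn j)
      by_cases hlast : m + 1 = n - 1
      · have hbpos : 0 < b ⟨m + 1, hm⟩ := by
          simp only [hbdef]
          split_ifs <;> simp_all <;> linarith
        have := Finset.sum_nonpos hle
        linarith [hsum ▸ this]
      · have hbz : b ⟨m + 1, hm⟩ = 0 := by
          simp only [hbdef]
          split_ifs <;> simp_all
        have hzero : ∀ j ∈ Finset.univ, H ⟨m + 1, hm⟩ j * g j = 0 := by
          rw [← Finset.sum_eq_zero_iff_of_nonpos hle]
          rw [hsum, hbz]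
        have hterm := hzero ⟨m, hmn⟩ (Finset.mem_univ _)
        have hHneg : H ⟨m + 1, hm⟩ ⟨m, hmn⟩ < 0 :=
          hneg ⟨m + 1, hm⟩ ⟨m, hmn⟩ (Or.inr rfl)
        have : g ⟨m, hmn⟩ = 0 := by
          rcases mul_eq_zero.mp hterm with h | h
          · exact absurd h (ne_of_lt hHneg)
          · exact h
        exact ih hmn this
  intro i
  have h1 := hgnn i
  have h2 : g i ≠ 0 := by
    have := key (i : ℕ) i.isLt
    simpa using this
  exact h1.lt_of_ne (Ne.symm h2)
end

section
/- Let n ≥ 1 and let H̃ be an n×n matrix in T_{A,n}, and let α > 0 and β > 0. Then there exists a spring-mass system with positive masses m̃_1,…,m̃_n and positive spring constants K̃_1,…,K̃_{n+1} whose associated matrix M̃^{-1/2} B̃ M̃^{-1/2} equals H̃ and which satisfies K̃_1/√(m̃_1) = α and K̃_{n+1}/√(m̃_n) = β. -/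
open Matrix

/-- The associated matrix `H = M^{-1/2} B M^{-1/2}` of a spring-mass system with
masses `m` and spring constants `K`. -/
noncomputable def assocH (n : ℕ) (m : Fin n → ℝ) (K : Fin (n + 1) → ℝ) :
    Matrix (Fin n) (Fin n) ℝ :=
  Matrix.diagonal (fun i => (Real.sqrt (m i))⁻¹) * stiffB n K *
    Matrix.diagonal (fun i => (Real.sqrt (m i))⁻¹)

/-- The set `T_{A,n}`: real symmetric tridiagonal matrices with negative sub- and
super-diagonal entries which are positive definite. -/
def MemTA {n : ℕ} (H : Matrix (Fin n) (Fin n) ℝ) : Prop :=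
  H.IsSymm ∧ IsTridiagonal H ∧
    (∀ i j : Fin n, ((i : ℕ) + 1 = (j : ℕ) ∨ (j : ℕ) + 1 = (i : ℕ)) → H i j < 0) ∧
    H.PosDef

/-- Given a matrix `H̃ ∈ T_{A,n}` and `α, β > 0`, there is a spring-mass system with positive
masses and positive spring constants whose associated matrix is `H̃` and which satisfies
`K_1/√(m_1) = α` and `K_{n+1}/√(m_n) = β`. -/
theorem exists_spring_mass_system_of_memTA
    (n : ℕ) (hn : 1 ≤ n) (Ht : Matrix (Fin n) (Fin n) ℝ) (hHt : MemTA Ht)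
    (α β : ℝ) (hα : 0 < α) (hβ : 0 < β) :
    ∃ (m : Fin n → ℝ) (K : Fin (n + 1) → ℝ),
      (∀ i, 0 < m i) ∧ (∀ j, 0 < K j) ∧ assocH n m K = Ht ∧
      K 0 / Real.sqrt (m ⟨0, by omega⟩) = α ∧
      K (Fin.last n) / Real.sqrt (m ⟨n - 1, by omega⟩) = β := by
  obtain ⟨hsymm, htri, hneg, hpd⟩ := hHt
  have hoff : ∀ i j : Fin n, i ≠ j → Ht i j ≤ 0 := by
    intro i j hij
    have hval : (i : ℕ) ≠ (j : ℕ) := fun h => hij (Fin.ext h)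
    by_cases h1 : (i : ℕ) + 1 = (j : ℕ)
    · exact (hneg i j (Or.inl h1)).le
    by_cases h2 : (j : ℕ) + 1 = (i : ℕ)
    · exact (hneg i j (Or.inr h2)).le
    · exact (htri i j (by omega)).le
  set e : Fin n → ℝ :=
    fun i => (if (i : ℕ) = 0 then α else 0) + (if (i : ℕ) = n - 1 then β else 0) with he
  have heval : ∀ i : Fin n,
      e i = (if (i : ℕ) = 0 then α else 0) + (if (i : ℕ) = n - 1 then β else 0) :=
    fun i => by rw [he]
  have he_nn : ∀ i, 0 ≤ e i := by
    intro i; rw [heval]; split_ifs <;> linarith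
  set u : Fin n → ℝ := Ht⁻¹ *ᵥ e with hu
  have hHu : Ht *ᵥ u = e := by
    rw [hu, Matrix.mulVec_mulVec,
      Matrix.mul_nonsing_inv _ (isUnit_iff_ne_zero.2 hpd.det_pos.ne'), Matrix.one_mulVec]
  have hsum : ∀ i, ∑ j, Ht i j * u j = e i := by
    intro i
    have := congrFun hHu i
    simpa [Matrix.mulVec, dotProduct] using this
  -- nonnegativity of u
  have hu0 : ∀ i, 0 ≤ u i := by
    set v : Fin n → ℝ := fun i => max (-(u i)) 0 with hv
    set w : Fin n → ℝ := fun i => max (u i) 0 with hw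
    have hvnn : ∀ i, 0 ≤ v i := fun i => le_max_right _ _
    have hwnn : ∀ i, 0 ≤ w i := fun i => le_max_right _ _
    have huvw : u = w - v := by
      funext i
      rcases le_total (u i) 0 with h | h
      · simp [hv, hw, max_eq_right h, max_eq_left (neg_nonneg.2 h)]
      · simp [hv, hw, max_eq_left h, max_eq_right (neg_nonpos.2 h)]
    have hvw0 : ∀ i, v i * w i = 0 := by
      intro i
      rcases le_total (u i) 0 with h | h
      · simp [hw, max_eq_right h]
      · simp [hv, max_eq_right (neg_nonpos.2 h)]
    have h1 : 0 ≤ v ⬝ᵥ (Ht *ᵥ u) := by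
      rw [hHu]
      exact Finset.sum_nonneg fun i _ => mul_nonneg (hvnn i) (he_nn i)
    have h2 : v ⬝ᵥ (Ht *ᵥ w) ≤ 0 := by
      have hrw : v ⬝ᵥ (Ht *ᵥ w) = ∑ i, ∑ j, v i * (Ht i j * w j) := by
        simp [Matrix.mulVec, dotProduct, Finset.mul_sum]
      rw [hrw]
      refine Finset.sum_nonpos fun i _ => Finset.sum_nonpos fun j _ => ?_
      by_cases hij : i = j
      · subst hij
        have : v i * (Ht i i * w i) = Ht i i * (v i * w i) := by ring
        rw [this, hvw0 i, mul_zero]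
      · exact mul_nonpos_of_nonneg_of_nonpos (hvnn i)
          (mul_nonpos_of_nonpos_of_nonneg (hoff i j hij) (hwnn j))
    have h3 : v ⬝ᵥ (Ht *ᵥ v) ≤ 0 := by
      have hsub : Ht *ᵥ u = Ht *ᵥ w - Ht *ᵥ v := by rw [huvw, Matrix.mulVec_sub]
      have h4 : v ⬝ᵥ (Ht *ᵥ u) = v ⬝ᵥ (Ht *ᵥ w) - v ⬝ᵥ (Ht *ᵥ v) := by
        rw [hsub, dotProduct_sub]
      linarith
    have hv0 : v = 0 := by
      by_contra hvne
      have hq : 0 < v ⬝ᵥ (Ht *ᵥ v) := by simpa using hpd.dotProduct_mulVec_pos hvne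
      linarith
    intro i
    rw [huvw]
    simp only [Pi.sub_apply, hv0, Pi.zero_apply, sub_zero]
    exact hwnn i
  -- strict positivity of u
  have hposk : ∀ k, ∀ hk : k < n, 0 < u ⟨k, hk⟩ := by
    intro k
    induction k with
    | zero =>
      intro hk
      rcases (hu0 ⟨0, hk⟩).lt_or_eq with h | h
      · exact h
      exfalso
      have hs := hsum ⟨0, hk⟩
      have hle : ∑ j, Ht ⟨0, hk⟩ j * u j ≤ 0 := by
        refine Finset.sum_nonpos fun j _ => ?_
        by_cases hj : j = ⟨0, hk⟩
        · subst hj; rw [← h, mul_zero]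
        · exact mul_nonpos_of_nonpos_of_nonneg (hoff _ j fun hc => hj hc.symm) (hu0 j)
      have hegt : 0 < e ⟨0, hk⟩ := by
        rw [heval, if_pos (show ((⟨0, hk⟩ : Fin n) : ℕ) = 0 from rfl)]
        split_ifs <;> linarith
      rw [hs] at hle
      linarith
    | succ k ih =>
      intro hk
      have hk' : k < n := by omega
      have huk := ih hk'
      rcases (hu0 ⟨k + 1, hk⟩).lt_or_eq with h | h
      · exact h
      exfalso
      have hs := hsum ⟨k + 1, hk⟩
      have hlt : ∑ j, Ht ⟨k + 1, hk⟩ j * u j < 0 := by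
        have hcomp := Finset.sum_lt_sum (s := Finset.univ)
          (f := fun j => Ht ⟨k + 1, hk⟩ j * u j) (g := fun _ => (0 : ℝ))
          (fun j _ => by
            show Ht ⟨k + 1, hk⟩ j * u j ≤ (0 : ℝ)
            by_cases hj : j = ⟨k + 1, hk⟩
            · subst hj; rw [← h, mul_zero]
            · exact mul_nonpos_of_nonpos_of_nonneg (hoff _ j fun hc => hj hc.symm) (hu0 j))
          ⟨⟨k, hk'⟩, Finset.mem_univ _,
            mul_neg_of_neg_of_pos (hneg _ _ (Or.inr (by simp))) huk⟩
        simpa using hcomp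
      rw [hs] at hlt
      exact absurd hlt (not_lt.2 (he_nn _))
  have hpos : ∀ i : Fin n, 0 < u i := fun i => hposk i.1 i.2
  -- three-term form of the linear system
  have hsum3 : ∀ i : Fin n,
      (if h : 0 < (i : ℕ) then
          Ht i ⟨(i : ℕ) - 1, Nat.lt_of_le_of_lt (Nat.sub_le _ _) i.isLt⟩ *
            u ⟨(i : ℕ) - 1, Nat.lt_of_le_of_lt (Nat.sub_le _ _) i.isLt⟩
        else 0)
        + Ht i i * u i
        + (if h : (i : ℕ) + 1 < n then Ht i ⟨(i : ℕ) + 1, h⟩ * u ⟨(i : ℕ) + 1, h⟩ else 0)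
      = e i := by
    intro i
    rw [← hsum i]
    have hterm : ∀ j : Fin n, Ht i j * u j =
        (if (j : ℕ) + 1 = (i : ℕ) then Ht i j * u j else 0)
          + ((if (j : ℕ) = (i : ℕ) then Ht i j * u j else 0)
          + (if (i : ℕ) + 1 = (j : ℕ) then Ht i j * u j else 0)) := by
      intro j
      by_cases h1 : (j : ℕ) + 1 = (i : ℕ)
      · rw [if_pos h1, if_neg (by omega), if_neg (by omega), add_zero, add_zero]
      by_cases h2 : (j : ℕ) = (i : ℕ)
      · rw [if_neg h1, if_pos h2, if_neg (by omega), zero_add, add_zero]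
      by_cases h3 : (i : ℕ) + 1 = (j : ℕ)
      · rw [if_neg h1, if_neg h2, if_pos h3, zero_add, zero_add]
      · rw [if_neg h1, if_neg h2, if_neg h3, htri i j (by omega), zero_mul, zero_add, zero_add]
    rw [Finset.sum_congr rfl fun j _ => hterm j, Finset.sum_add_distrib, Finset.sum_add_distrib]
    have hS2 : ∑ j : Fin n, (if (j : ℕ) = (i : ℕ) then Ht i j * u j else 0) = Ht i i * u i := by
      rw [Finset.sum_congr rfl (fun j _ => by
        rw [if_congr (show ((j : ℕ) = (i : ℕ)) ↔ j = i by rw [Fin.ext_iff]) rfl rfl]),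
        Finset.sum_ite_eq' Finset.univ i fun j => Ht i j * u j, if_pos (Finset.mem_univ _)]
    have hS1 : ∑ j : Fin n, (if (j : ℕ) + 1 = (i : ℕ) then Ht i j * u j else 0)
        = (if h : 0 < (i : ℕ) then
            Ht i ⟨(i : ℕ) - 1, Nat.lt_of_le_of_lt (Nat.sub_le _ _) i.isLt⟩ *
              u ⟨(i : ℕ) - 1, Nat.lt_of_le_of_lt (Nat.sub_le _ _) i.isLt⟩
          else 0) := by
      by_cases hi0 : 0 < (i : ℕ)
      · rw [dif_pos hi0]
        rw [Finset.sum_congr rfl (fun j _ => by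
          rw [if_congr (show ((j : ℕ) + 1 = (i : ℕ)) ↔
            j = (⟨(i : ℕ) - 1, Nat.lt_of_le_of_lt (Nat.sub_le _ _) i.isLt⟩ : Fin n) by
              rw [Fin.ext_iff]; simp only; omega) rfl rfl]),
          Finset.sum_ite_eq' Finset.univ _ fun j => Ht i j * u j, if_pos (Finset.mem_univ _)]
      · rw [dif_neg hi0]
        exact Finset.sum_eq_zero fun j _ => if_neg (by omega)
    have hS3 : ∑ j : Fin n, (if (i : ℕ) + 1 = (j : ℕ) then Ht i j * u j else 0)
        = (if h : (i : ℕ) + 1 < n then Ht i ⟨(i : ℕ) + 1, h⟩ * u ⟨(i : ℕ) + 1, h⟩ else 0) := by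
      by_cases hin : (i : ℕ) + 1 < n
      · rw [dif_pos hin]
        rw [Finset.sum_congr rfl (fun j _ => by
          rw [if_congr (show ((i : ℕ) + 1 = (j : ℕ)) ↔ j = (⟨(i : ℕ) + 1, hin⟩ : Fin n) by
              rw [Fin.ext_iff]; simp only; omega) rfl rfl]),
          Finset.sum_ite_eq' Finset.univ _ fun j => Ht i j * u j, if_pos (Finset.mem_univ _)]
      · rw [dif_neg hin]
        refine Finset.sum_eq_zero fun j _ => if_neg ?_
        have := j.isLt
        omega
    rw [hS1, hS2, hS3]
    ring
  -- the witnesses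
  set m : Fin n → ℝ := fun i => u i * u i with hm
  have hmpos : ∀ i, 0 < m i := fun i => mul_pos (hpos i) (hpos i)
  have hsq : ∀ i, Real.sqrt (m i) = u i := fun i => Real.sqrt_mul_self (hpos i).le
  set K : Fin (n + 1) → ℝ := fun j =>
    if h0 : (j : ℕ) = 0 then α * u ⟨0, hn⟩
    else if hn' : (j : ℕ) = n then β * u ⟨n - 1, by omega⟩
    else -(u ⟨(j : ℕ) - 1, by have := j.isLt; omega⟩ * u ⟨(j : ℕ), by have := j.isLt; omega⟩ *
      Ht ⟨(j : ℕ) - 1, by have := j.isLt; omega⟩ ⟨(j : ℕ), by have := j.isLt; omega⟩) with hKdef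
  have hKval : ∀ j : Fin (n + 1), K j =
      if h0 : (j : ℕ) = 0 then α * u ⟨0, hn⟩
      else if hn' : (j : ℕ) = n then β * u ⟨n - 1, by omega⟩
      else -(u ⟨(j : ℕ) - 1, by have := j.isLt; omega⟩ * u ⟨(j : ℕ), by have := j.isLt; omega⟩ *
        Ht ⟨(j : ℕ) - 1, by have := j.isLt; omega⟩ ⟨(j : ℕ), by have := j.isLt; omega⟩) :=
    fun j => by rw [hKdef]
  have hKpos : ∀ j, 0 < K j := by
    intro j
    rw [hKval]
    split_ifs with h0 hn'
    · exact mul_pos hα (hpos _)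
    · exact mul_pos hβ (hpos _)
    · have hneg' : Ht ⟨(j : ℕ) - 1, by have := j.isLt; omega⟩
          ⟨(j : ℕ), by have := j.isLt; omega⟩ < 0 :=
        hneg _ _ (Or.inl (by simp only; omega))
      have hp := mul_pos (hpos ⟨(j : ℕ) - 1, by have := j.isLt; omega⟩)
        (hpos ⟨(j : ℕ), by have := j.isLt; omega⟩)
      nlinarith
  refine ⟨m, K, hmpos, hKpos, ?_, ?_, ?_⟩
  · -- main equality
    ext i j
    have hine := (hpos i).ne'
    have hjne := (hpos j).ne'
    simp only [assocH, Matrix.mul_diagonal, Matrix.diagonal_mul, hsq, stiffB, Matrix.of_apply]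
    by_cases hij : (i : ℕ) = (j : ℕ)
    · have hij' : i = j := Fin.ext hij
      subst hij'
      rw [if_pos rfl]
      have hs3 := hsum3 i
      rw [heval] at hs3
      have hKc := hKval i.castSucc
      have hKs := hKval i.succ
      simp only [Fin.coe_castSucc, Fin.val_succ] at hKc hKs
      by_cases hi0 : (i : ℕ) = 0 <;> by_cases hilast : (i : ℕ) + 1 = n
      · -- n = 1 case
        rw [dif_pos hi0] at hKc
        rw [dif_neg (by omega), dif_pos (by omega)] at hKs
        rw [dif_neg (by omega), dif_neg (by omega), zero_add, add_zero,
          if_pos hi0, if_pos (by omega)] at hs3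
        have hu1 : (⟨0, hn⟩ : Fin n) = i := Fin.ext (by simp only; omega)
        have hu2 : (⟨n - 1, by omega⟩ : Fin n) = i := Fin.ext (by simp only; omega)
        rw [hKc, hKs, hu1, hu2]
        field_simp
        linear_combination (-1) * hs3
      · -- i = 0 < n - 1
        rw [dif_pos hi0] at hKc
        rw [dif_neg (by omega), dif_neg (by omega)] at hKs
        rw [dif_neg (by omega), dif_pos (by omega), if_pos hi0, if_neg (by omega), add_zero,
          zero_add] at hs3
        have hu1 : (⟨0, hn⟩ : Fin n) = i := Fin.ext (by simp only; omega)
        have hi1 : (⟨(i : ℕ) + 1 - 1, by omega⟩ : Fin n) = i := Fin.ext (by simp only; omega)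
        rw [hKc, hKs, hu1, hi1]
        have hsym1 : Ht i ⟨(i : ℕ) + 1, by omega⟩ = Ht ⟨(i : ℕ) + 1, by omega⟩ i :=
          (hsymm.apply _ _).symm
        field_simp
        linear_combination (-1) * hs3
      · -- 0 < i = n - 1
        rw [dif_neg hi0, dif_neg (by omega)] at hKc
        rw [dif_neg (by omega), dif_pos (by omega)] at hKs
        rw [dif_pos (by omega), dif_neg (by omega), add_zero, if_neg hi0, if_pos (by omega),
          zero_add] at hs3
        have hu2 : (⟨n - 1, by omega⟩ : Fin n) = i := Fin.ext (by simp only; omega)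
        have hi1 : (⟨(i : ℕ), by omega⟩ : Fin n) = i := Fin.ext rfl
        rw [hKc, hKs, hu2, hi1]
        have hsym1 : Ht i ⟨(i : ℕ) - 1, by omega⟩ = Ht ⟨(i : ℕ) - 1, by omega⟩ i :=
          (hsymm.apply _ _).symm
        field_simp
        linear_combination (-1) * hs3 +
          (u ⟨(i : ℕ) - 1, by omega⟩) * hsym1
      · -- interior
        rw [dif_neg hi0, dif_neg (by omega)] at hKc
        rw [dif_neg (by omega), dif_neg (by omega)] at hKs
        rw [dif_pos (by omega), dif_pos (by omega), if_neg hi0, if_neg (by omega),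
          add_zero] at hs3
        have hi1 : (⟨(i : ℕ), by omega⟩ : Fin n) = i := Fin.ext rfl
        have hi2 : (⟨(i : ℕ) + 1 - 1, by omega⟩ : Fin n) = i := Fin.ext (by simp only; omega)
        rw [hKc, hKs, hi1, hi2]
        have hsym1 : Ht i ⟨(i : ℕ) - 1, by omega⟩ = Ht ⟨(i : ℕ) - 1, by omega⟩ i :=
          (hsymm.apply _ _).symm
        have hsym2 : Ht i ⟨(i : ℕ) + 1, by omega⟩ = Ht ⟨(i : ℕ) + 1, by omega⟩ i :=
          (hsymm.apply _ _).symm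
        field_simp
        linear_combination (-1) * hs3 +
          (u ⟨(i : ℕ) - 1, by omega⟩) * hsym1
    · by_cases hadj1 : (i : ℕ) + 1 = (j : ℕ)
      · rw [if_neg hij, if_pos hadj1]
        have hKs := hKval i.succ
        simp only [Fin.val_succ] at hKs
        rw [dif_neg (by omega), dif_neg (by have := j.isLt; omega)] at hKs
        have hi2 : (⟨(i : ℕ) + 1 - 1, by omega⟩ : Fin n) = i := Fin.ext (by simp only; omega)
        have hj2 : (⟨(i : ℕ) + 1, by omega⟩ : Fin n) = j := Fin.ext (by simp only; omega)
        rw [hKs, hi2, hj2]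
        field_simp
      · by_cases hadj2 : (j : ℕ) + 1 = (i : ℕ)
        · rw [if_neg hij, if_neg hadj1, if_pos hadj2]
          have hKs := hKval j.succ
          simp only [Fin.val_succ] at hKs
          rw [dif_neg (by omega), dif_neg (by have := i.isLt; omega)] at hKs
          have hj2 : (⟨(j : ℕ) + 1 - 1, by omega⟩ : Fin n) = j := Fin.ext (by simp only; omega)
          have hi2 : (⟨(j : ℕ) + 1, by omega⟩ : Fin n) = i := Fin.ext (by simp only; omega)
          rw [hKs, hj2, hi2]
          have hsym1 : Ht j i = Ht i j := hsymm.apply i j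
          field_simp
          linear_combination hsym1
        · rw [if_neg hij, if_neg hadj1, if_neg hadj2, htri i j (by omega), mul_zero, zero_mul]
  · -- K 0 / sqrt (m 0) = α
    have hK0 := hKval 0
    rw [dif_pos (by simp)] at hK0
    rw [hK0, hsq, mul_div_assoc, div_self (hpos _).ne', mul_one]
  · -- K last / sqrt (m (n-1)) = β
    have hKl := hKval (Fin.last n)
    rw [dif_neg (by simp; omega), dif_pos (by simp)] at hKl
    rw [hKl, hsq, mul_div_assoc, div_self (hpos _).ne', mul_one]
end

section
/- Fix n ≥ 2, W > 0, ρ > 0, γ_1 ≥ 0, and set c = (4/3)πρ. Define the map Φ : ℝ_{>0}^n × ℝ^{n−1} → ℝ^{2n−1} sending (r_1,…,r_n, γ_2,…,γ_n) to the list of the n diagonal entries H(1,1),…,H(n,n) followed by the n−1 off-diagonal entries H(1,2),…,H(n−1,n) of the granular-chain associated matrix H(r,γ). Then the Jacobian matrix of Φ is invertible (has nonzero determinant) at every point with r_1,…,r_n > 0. -/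
open Matrix

/-- The associated matrix `H(r, γ)` of a generalized granular chain with radii `r` and
wall-spring stiffnesses `γ` (here `γ j` is the stiffness attached to the `(j+1)`-st bead),
material constant `W` and density `ρ`, with `c = (4/3)πρ`.  Its diagonal entries are
`H j j = (W (κ_{j-1} + κ_j) + γ_j) / (c r_j³)` (with boundary stiffnesses `r_1^{1/3}`,
`r_n^{1/3}` at the ends) and its off-diagonal entries are
`H j (j+1) = - W κ_j / (c r_j^{3/2} r_{j+1}^{3/2})`, where
`κ_j = (r_j r_{j+1} / (r_j + r_{j+1}))^{1/3}`. -/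
noncomputable def granH (n : ℕ) (W ρ : ℝ) (r γ : Fin n → ℝ) :
    Matrix (Fin n) (Fin n) ℝ :=
  Matrix.of fun i j =>
    let c : ℝ := 4 / 3 * Real.pi * ρ
    let rr : ℕ → ℝ := fun k => if h : k < n then r ⟨k, h⟩ else 0
    if (i : ℕ) = (j : ℕ) then
      (W * ((if (i : ℕ) = 0 then rr 0 ^ ((1 : ℝ) / 3)
             else (rr ((i : ℕ) - 1) * rr i / (rr ((i : ℕ) - 1) + rr i)) ^ ((1 : ℝ) / 3)) +
            (if (i : ℕ) = n - 1 then rr (n - 1) ^ ((1 : ℝ) / 3)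
             else (rr i * rr ((i : ℕ) + 1) / (rr i + rr ((i : ℕ) + 1))) ^ ((1 : ℝ) / 3))) +
        γ i) / (c * rr i ^ (3 : ℕ))
    else if (i : ℕ) + 1 = (j : ℕ) then
      -(W * (rr i * rr ((i : ℕ) + 1) / (rr i + rr ((i : ℕ) + 1))) ^ ((1 : ℝ) / 3)) /
        (c * rr i ^ ((3 : ℝ) / 2) * rr ((i : ℕ) + 1) ^ ((3 : ℝ) / 2))
    else if (j : ℕ) + 1 = (i : ℕ) then
      -(W * (rr j * rr ((j : ℕ) + 1) / (rr j + rr ((j : ℕ) + 1))) ^ ((1 : ℝ) / 3)) /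
        (c * rr j ^ ((3 : ℝ) / 2) * rr ((j : ℕ) + 1) ^ ((3 : ℝ) / 2))
    else 0

/-- The full vector of wall-spring stiffnesses `(γ_1, γ_2, …, γ_n)` built from the fixed
first stiffness `γ_1` and the variable stiffnesses `(γ_2, …, γ_n)`. -/
noncomputable def gammaFull (n : ℕ) (γ1 : ℝ) (γrest : Fin (n - 1) → ℝ) : Fin n → ℝ :=
  fun j => if h : (j : ℕ) = 0 then γ1
    else γrest ⟨(j : ℕ) - 1, by have := j.isLt; omega⟩

/-- The map `Φ` sending `(r_1,…,r_n, γ_2,…,γ_n)` to the `n` diagonal entries followed by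
the `n-1` super-diagonal entries of the granular-chain associated matrix `H(r, γ)`. -/
noncomputable def granPhi (n : ℕ) (W ρ γ1 : ℝ) :
    ((Fin n → ℝ) × (Fin (n - 1) → ℝ)) → ((Fin n → ℝ) × (Fin (n - 1) → ℝ)) :=
  fun p =>
    (fun j => granH n W ρ p.1 (gammaFull n γ1 p.2) j j,
     fun t => granH n W ρ p.1 (gammaFull n γ1 p.2)
       ⟨(t : ℕ), by have := t.isLt; omega⟩ ⟨(t : ℕ) + 1, by have := t.isLt; omega⟩)

open Real

lemma lin (x v0 : ℝ) : HasDerivAt (fun τ : ℝ => x + τ * v0) v0 0 := by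
  simpa using ((hasDerivAt_id (0:ℝ)).mul_const v0).const_add x


lemma aux_D0 {W c γ1 x y : ℝ} (hW : 0 < W) (hc : 0 < c) (hγ1 : 0 ≤ γ1) (hx : 0 < x)
    (hy : 0 < y) :
    ∃ a0 a1 : ℝ, a0 < 0 ∧ 0 < a1 ∧ ∀ v0 v1 : ℝ,
      HasDerivAt (fun τ : ℝ =>
        (W * ((x + τ * v0) ^ ((1:ℝ)/3) +
          ((x + τ * v0) * (y + τ * v1) / ((x + τ * v0) + (y + τ * v1))) ^ ((1:ℝ)/3)) + γ1) /
        (c * (x + τ * v0) ^ (3:ℕ))) (a0 * v0 + a1 * v1) 0 := by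
  set q : ℝ := x * y / (x + y) with hqdef
  have hs : (0:ℝ) < x + y := by positivity
  have hq : 0 < q := by positivity
  refine ⟨(W * ((1/3 * x ^ ((1:ℝ)/3 - 1)) + (1/3 * q ^ ((1:ℝ)/3 - 1)) * (y^2/(x+y)^2)) *
      (c * x^3) - (W * (x ^ ((1:ℝ)/3) + q ^ ((1:ℝ)/3)) + γ1) * (c * (3*x^2))) / (c*x^3)^2,
    W * ((1/3 * q ^ ((1:ℝ)/3 - 1)) * (x^2/(x+y)^2)) / (c*x^3), ?_, ?_, ?_⟩
  · -- a0 < 0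
    apply div_neg_of_neg_of_pos _ (by positivity)
    have hX' : 0 < x ^ ((1:ℝ)/3 - 1) := Real.rpow_pos_of_pos hx _
    have hQ' : 0 < q ^ ((1:ℝ)/3 - 1) := Real.rpow_pos_of_pos hq _
    have eX : x ^ ((1:ℝ)/3) = x ^ ((1:ℝ)/3 - 1) * x := by
      rw [← Real.rpow_add_one hx.ne']; norm_num
    have eQ : q ^ ((1:ℝ)/3) = q ^ ((1:ℝ)/3 - 1) * q := by
      rw [← Real.rpow_add_one hq.ne']; norm_num
    rw [eX, eQ]
    have hy1 : q * (y/(x+y)) < q := by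
      have : y/(x+y) < 1 := (div_lt_one hs).2 (by linarith)
      nlinarith
    have e : y^2/(x+y)^2 * x = q * (y/(x+y)) := by rw [hqdef]; field_simp
    have key : 1/3 * (y^2/(x+y)^2 * x) < 3 * q := by rw [e]; nlinarith
    have inner : W * (1/3 * x ^ ((1:ℝ)/3 - 1) + 1/3 * q ^ ((1:ℝ)/3 - 1) * (y^2/(x+y)^2)) * x -
        3 * (W * (x ^ ((1:ℝ)/3 - 1) * x + q ^ ((1:ℝ)/3 - 1) * q) + γ1) < 0 := by
      nlinarith [mul_pos hW hQ', mul_pos (mul_pos hW hX') hx,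
        mul_lt_mul_of_pos_left key (mul_pos hW hQ')]
    calc W * (1/3 * x ^ ((1:ℝ)/3 - 1) + 1/3 * q ^ ((1:ℝ)/3 - 1) * (y^2/(x+y)^2)) * (c*x^3) -
        (W * (x ^ ((1:ℝ)/3 - 1) * x + q ^ ((1:ℝ)/3 - 1) * q) + γ1) * (c*(3*x^2))
        = (c * x^2) * (W * (1/3 * x ^ ((1:ℝ)/3 - 1) + 1/3 * q ^ ((1:ℝ)/3 - 1) * (y^2/(x+y)^2)) * x -
          3 * (W * (x ^ ((1:ℝ)/3 - 1) * x + q ^ ((1:ℝ)/3 - 1) * q) + γ1)) := by ring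
      _ < 0 := mul_neg_of_pos_of_neg (by positivity) inner
  · -- 0 < a1
    have hQ' : 0 < q ^ ((1:ℝ)/3 - 1) := Real.rpow_pos_of_pos hq _
    have h1 : (0:ℝ) < x^2/(x+y)^2 := by positivity
    exact div_pos (mul_pos hW (mul_pos (by linarith) h1)) (by positivity)
  · intro v0 v1
    have ha := lin x v0
    have hb := lin y v1
    have hxne : (fun τ : ℝ => x + τ * v0) 0 ≠ 0 := by simpa using hx.ne'
    have hsne : (fun τ : ℝ => (x + τ * v0) + (y + τ * v1)) 0 ≠ 0 := by
      simpa using hs.ne'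
    have hq2 := (ha.mul hb).div (ha.add hb) hsne
    have hqne : (fun τ : ℝ => (x + τ * v0) * (y + τ * v1) / ((x + τ * v0) + (y + τ * v1))) 0 ≠ 0 := by
      simp [hx.ne', hy.ne', hs.ne']
    have hQ := hq2.rpow_const (p := (1:ℝ)/3) (Or.inl hqne)
    have hX := ha.rpow_const (p := (1:ℝ)/3) (Or.inl hxne)
    have hnum := ((hX.add hQ).const_mul W).add_const γ1
    have hden := (ha.pow 3).const_mul c
    have hdne : (fun τ : ℝ => c * (x + τ * v0) ^ (3:ℕ)) 0 ≠ 0 := by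
      simpa using (by positivity : (0:ℝ) < c * x ^ 3).ne'
    have H := hnum.div hden hdne
    convert H using 1
    · rfl
    · rfl
    · rfl
    simp only [hqdef, zero_mul, add_zero, Pi.mul_apply, Pi.add_apply, Pi.pow_apply, Pi.div_apply, Nat.cast_ofNat]
    field_simp
    ring

lemma aux_F {W c x y : ℝ} (hW : 0 < W) (hc : 0 < c) (hx : 0 < x) (hy : 0 < y) :
    ∃ b0 b1 : ℝ, 0 < b0 ∧ 0 < b1 ∧ ∀ v0 v1 : ℝ,
      HasDerivAt (fun τ : ℝ =>
        -(W * ((x + τ * v0) * (y + τ * v1) / ((x + τ * v0) + (y + τ * v1))) ^ ((1:ℝ)/3)) /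
        (c * (x + τ * v0) ^ ((3:ℝ)/2) * (y + τ * v1) ^ ((3:ℝ)/2))) (b0 * v0 + b1 * v1) 0 := by
  set q : ℝ := x * y / (x + y) with hqdef
  have hs : (0:ℝ) < x + y := by positivity
  have hq : 0 < q := by positivity
  have hQ' : 0 < q ^ ((1:ℝ)/3 - 1) := Real.rpow_pos_of_pos hq _
  have hX' : 0 < x ^ ((3:ℝ)/2 - 1) := Real.rpow_pos_of_pos hx _
  have hY' : 0 < y ^ ((3:ℝ)/2 - 1) := Real.rpow_pos_of_pos hy _
  have eQ : q ^ ((1:ℝ)/3) = q ^ ((1:ℝ)/3 - 1) * q := by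
    rw [← Real.rpow_add_one hq.ne']; norm_num
  have eX : x ^ ((3:ℝ)/2) = x ^ ((3:ℝ)/2 - 1) * x := by
    rw [← Real.rpow_add_one hx.ne']; norm_num
  have eY : y ^ ((3:ℝ)/2) = y ^ ((3:ℝ)/2 - 1) * y := by
    rw [← Real.rpow_add_one hy.ne']; norm_num
  have hey : y/(x+y) < 1 := (div_lt_one hs).2 (by linarith)
  have hex : x/(x+y) < 1 := (div_lt_one hs).2 (by linarith)
  refine ⟨(-(W * (1/3 * q ^ ((1:ℝ)/3 - 1) * (y^2/(x+y)^2))) * (c * x ^ ((3:ℝ)/2) * y ^ ((3:ℝ)/2)) +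
      W * q ^ ((1:ℝ)/3) * (c * (3/2 * x ^ ((3:ℝ)/2 - 1)) * y ^ ((3:ℝ)/2))) /
      (c * x ^ ((3:ℝ)/2) * y ^ ((3:ℝ)/2))^2,
    (-(W * (1/3 * q ^ ((1:ℝ)/3 - 1) * (x^2/(x+y)^2))) * (c * x ^ ((3:ℝ)/2) * y ^ ((3:ℝ)/2)) +
      W * q ^ ((1:ℝ)/3) * (c * x ^ ((3:ℝ)/2) * (3/2 * y ^ ((3:ℝ)/2 - 1)))) /
      (c * x ^ ((3:ℝ)/2) * y ^ ((3:ℝ)/2))^2, ?_, ?_, ?_⟩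
  · apply div_pos _ (by positivity)
    have e : y^2/(x+y)^2 * x = q * (y/(x+y)) := by rw [hqdef]; field_simp
    have brk : 0 < 3/2 * q - 1/3 * (y^2/(x+y)^2) * x := by
      rw [show 1/3 * (y^2/(x+y)^2) * x = 1/3 * (y^2/(x+y)^2 * x) by ring, e]; nlinarith
    calc (0:ℝ) < (c * W * (y ^ ((3:ℝ)/2) * (q ^ ((1:ℝ)/3 - 1) * x ^ ((3:ℝ)/2 - 1)))) *
          (3/2 * q - 1/3 * (y^2/(x+y)^2) * x) := by positivity
      _ = -(W * (1/3 * q ^ ((1:ℝ)/3 - 1) * (y^2/(x+y)^2))) * (c * x ^ ((3:ℝ)/2) * y ^ ((3:ℝ)/2)) +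
          W * q ^ ((1:ℝ)/3) * (c * (3/2 * x ^ ((3:ℝ)/2 - 1)) * y ^ ((3:ℝ)/2)) := by
        rw [eQ, eX]; ring
  · apply div_pos _ (by positivity)
    have e : x^2/(x+y)^2 * y = q * (x/(x+y)) := by rw [hqdef]; field_simp
    have brk : 0 < 3/2 * q - 1/3 * (x^2/(x+y)^2) * y := by
      rw [show 1/3 * (x^2/(x+y)^2) * y = 1/3 * (x^2/(x+y)^2 * y) by ring, e]; nlinarith
    calc (0:ℝ) < (c * W * (x ^ ((3:ℝ)/2) * (q ^ ((1:ℝ)/3 - 1) * y ^ ((3:ℝ)/2 - 1)))) *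
          (3/2 * q - 1/3 * (x^2/(x+y)^2) * y) := by positivity
      _ = -(W * (1/3 * q ^ ((1:ℝ)/3 - 1) * (x^2/(x+y)^2))) * (c * x ^ ((3:ℝ)/2) * y ^ ((3:ℝ)/2)) +
          W * q ^ ((1:ℝ)/3) * (c * x ^ ((3:ℝ)/2) * (3/2 * y ^ ((3:ℝ)/2 - 1))) := by
        rw [eQ, eY]; ring
  · intro v0 v1
    have ha := lin x v0
    have hb := lin y v1
    have hxne : (fun τ : ℝ => x + τ * v0) 0 ≠ 0 := by simpa using hx.ne'
    have hsne : (fun τ : ℝ => (x + τ * v0) + (y + τ * v1)) 0 ≠ 0 := by simpa using hs.ne'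
    have hq2 := (ha.mul hb).div (ha.add hb) hsne
    have hqne : (fun τ : ℝ => (x + τ * v0) * (y + τ * v1) / ((x + τ * v0) + (y + τ * v1))) 0 ≠ 0 := by
      simp [hx.ne', hy.ne', hs.ne']
    have hQ := hq2.rpow_const (p := (1:ℝ)/3) (Or.inl hqne)
    have hnum := (hQ.const_mul W).neg
    have hXd := ha.rpow_const (p := (3:ℝ)/2) (Or.inl hxne)
    have hYd := hb.rpow_const (p := (3:ℝ)/2)
      (Or.inl (by simpa using hy.ne' : (fun τ : ℝ => y + τ * v1) 0 ≠ 0))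
    have hden := (hXd.const_mul c).mul hYd
    have hdne : (fun τ : ℝ => c * (x + τ * v0) ^ ((3:ℝ)/2) * (y + τ * v1) ^ ((3:ℝ)/2)) 0 ≠ 0 := by
      have : (0:ℝ) < c * x ^ ((3:ℝ)/2) * y ^ ((3:ℝ)/2) := by positivity
      simpa using this.ne'
    have H := hnum.div hden hdne
    convert H using 1
    · rfl
    · rfl
    · rfl
    simp only [hqdef, zero_mul, add_zero, Pi.mul_apply, Pi.add_apply, Pi.pow_apply, Pi.div_apply, Pi.neg_apply, Nat.cast_ofNat]
    field_simp
    ring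

lemma granPhi_fst (n : ℕ) (hn : 2 ≤ n) (W ρ γ1 : ℝ)
    (p : (Fin n → ℝ) × (Fin (n - 1) → ℝ)) (jv : ℕ) (hjv : jv < n) :
    (granPhi n W ρ γ1 p).1 ⟨jv, hjv⟩ =
      (W * ((if jv = 0 then p.1 ⟨0, by omega⟩ ^ ((1:ℝ)/3)
             else (p.1 ⟨jv - 1, by omega⟩ * p.1 ⟨jv, hjv⟩ /
               (p.1 ⟨jv - 1, by omega⟩ + p.1 ⟨jv, hjv⟩)) ^ ((1:ℝ)/3)) +
            (if h : jv = n - 1 then p.1 ⟨n - 1, by omega⟩ ^ ((1:ℝ)/3)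
             else (p.1 ⟨jv, hjv⟩ * p.1 ⟨jv + 1, by omega⟩ /
               (p.1 ⟨jv, hjv⟩ + p.1 ⟨jv + 1, by omega⟩)) ^ ((1:ℝ)/3))) +
          gammaFull n γ1 p.2 ⟨jv, hjv⟩) / (4 / 3 * Real.pi * ρ * p.1 ⟨jv, hjv⟩ ^ (3 : ℕ)) := by
  simp only [granPhi]
  by_cases h0 : jv = 0 <;> by_cases h2 : jv = n - 1
  · omega
  · subst h0
    simp [granH, h2, (show 0 < n by omega), (show 1 < n by omega),
      (show ¬(0 = n - 1) by omega)]
  · subst h2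
    simp [granH, (show ¬(n - 1 = 0) by omega), (show n - 1 < n by omega),
      (show n - 1 - 1 < n by omega)]
  · simp [granH, h0, h2, hjv, (show jv - 1 < n by omega), (show jv + 1 < n by omega)]

lemma granPhi_snd (n : ℕ) (hn : 2 ≤ n) (W ρ γ1 : ℝ)
    (p : (Fin n → ℝ) × (Fin (n - 1) → ℝ)) (t : Fin (n - 1)) :
    (granPhi n W ρ γ1 p).2 t =
      -(W * (p.1 ⟨t, by have := t.isLt; omega⟩ * p.1 ⟨(t : ℕ) + 1, by have := t.isLt; omega⟩ /
          (p.1 ⟨t, by have := t.isLt; omega⟩ + p.1 ⟨(t : ℕ) + 1, by have := t.isLt; omega⟩)) ^ ((1:ℝ)/3)) /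
        (4 / 3 * Real.pi * ρ * p.1 ⟨t, by have := t.isLt; omega⟩ ^ ((3:ℝ)/2) *
          p.1 ⟨(t : ℕ) + 1, by have := t.isLt; omega⟩ ^ ((3:ℝ)/2)) := by
  have ht := t.isLt
  simp only [granPhi]
  simp [granH, (show (t:ℕ) < n by omega), (show (t:ℕ) + 1 < n by omega),
    (show ¬((t:ℕ) = (t:ℕ) + 1) by omega)]

lemma aux_lin (A D g w : ℝ) : HasDerivAt (fun τ : ℝ => (A + (g + τ * w)) / D) (w / D) 0 := by
  simpa using ((((hasDerivAt_id (0:ℝ)).mul_const w).const_add g).const_add A).div_const D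


/-- The Jacobian of the map `Φ = (diagonal entries, off-diagonal entries)` of the
granular-chain associated matrix, with respect to `(r, γ)`, is invertible at every point
with all radii positive. -/
theorem granPhi_jacobian_det_ne_zero
    (n : ℕ) (hn : 2 ≤ n) (W ρ γ1 : ℝ) (hW : 0 < W) (hρ : 0 < ρ) (hγ1 : 0 ≤ γ1)
    (r : Fin n → ℝ) (hr : ∀ i, 0 < r i) (γrest : Fin (n - 1) → ℝ) :
    LinearMap.det
      ((fderiv ℝ (granPhi n W ρ γ1) (r, γrest) :
        ((Fin n → ℝ) × (Fin (n - 1) → ℝ)) →L[ℝ] ((Fin n → ℝ) × (Fin (n - 1) → ℝ))) :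
        ((Fin n → ℝ) × (Fin (n - 1) → ℝ)) →ₗ[ℝ] ((Fin n → ℝ) × (Fin (n - 1) → ℝ))) ≠ 0 := by
  intro hdet
  have hπ := Real.pi_pos
  have hc : (0:ℝ) < 4 / 3 * Real.pi * ρ := by positivity
  have hdiv : ∀ {f g : ((Fin n → ℝ) × (Fin (n - 1) → ℝ)) → ℝ},
      DifferentiableAt ℝ f (r, γrest) → DifferentiableAt ℝ g (r, γrest) →
      g (r, γrest) ≠ 0 → DifferentiableAt ℝ (fun p => f p / g p) (r, γrest) := by
    intro f g hf hg hgne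
    simp only [div_eq_mul_inv]
    exact hf.mul (hg.inv hgne)
  -- differentiability of coordinate functions
  have hb1 : ∀ (k : ℕ) (hk : k < n),
      DifferentiableAt ℝ (fun p : (Fin n → ℝ) × (Fin (n - 1) → ℝ) => p.1 ⟨k, hk⟩) (r, γrest) :=
    fun k hk =>
      ((hasFDerivAt_apply (𝕜 := ℝ) ⟨k, hk⟩ r).differentiableAt).comp (g := fun f : Fin n → ℝ => f ⟨k, hk⟩) _ differentiableAt_fst
  have hb2 : ∀ (s : Fin (n - 1)),
      DifferentiableAt ℝ (fun p : (Fin n → ℝ) × (Fin (n - 1) → ℝ) => p.2 s) (r, γrest) :=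
    fun s =>
      ((hasFDerivAt_apply (𝕜 := ℝ) s γrest).differentiableAt).comp (g := fun f : Fin (n - 1) → ℝ => f s) _ differentiableAt_snd
  have hqd : ∀ (k : ℕ) (hk : k < n) (l : ℕ) (hl : l < n),
      DifferentiableAt ℝ (fun p : (Fin n → ℝ) × (Fin (n - 1) → ℝ) =>
        (p.1 ⟨k, hk⟩ * p.1 ⟨l, hl⟩ / (p.1 ⟨k, hk⟩ + p.1 ⟨l, hl⟩)) ^ ((1:ℝ)/3)) (r, γrest) := by
    intro k hk l hl
    have h1 := hr ⟨k, hk⟩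
    have h2 := hr ⟨l, hl⟩
    have hA : DifferentiableAt ℝ (fun p : (Fin n → ℝ) × (Fin (n - 1) → ℝ) =>
        p.1 ⟨k, hk⟩ * p.1 ⟨l, hl⟩) (r, γrest) := (hb1 k hk).mul (hb1 l hl)
    have hB : DifferentiableAt ℝ (fun p : (Fin n → ℝ) × (Fin (n - 1) → ℝ) =>
        p.1 ⟨k, hk⟩ + p.1 ⟨l, hl⟩) (r, γrest) := (hb1 k hk).add (hb1 l hl)
    have hAB : DifferentiableAt ℝ (fun p : (Fin n → ℝ) × (Fin (n - 1) → ℝ) =>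
        p.1 ⟨k, hk⟩ * p.1 ⟨l, hl⟩ / (p.1 ⟨k, hk⟩ + p.1 ⟨l, hl⟩)) (r, γrest) :=
      hdiv hA hB (show r ⟨k, hk⟩ + r ⟨l, hl⟩ ≠ 0 by positivity)
    exact hAB.rpow_const
      (Or.inl (show r ⟨k, hk⟩ * r ⟨l, hl⟩ / (r ⟨k, hk⟩ + r ⟨l, hl⟩) ≠ 0 by positivity))
  have hrt : ∀ (k : ℕ) (hk : k < n) (e : ℝ),
      DifferentiableAt ℝ (fun p : (Fin n → ℝ) × (Fin (n - 1) → ℝ) =>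
        p.1 ⟨k, hk⟩ ^ e) (r, γrest) :=
    fun k hk e => (hb1 k hk).rpow_const (Or.inl (hr ⟨k, hk⟩).ne')
  have hgam : ∀ (k : ℕ) (hk : k < n),
      DifferentiableAt ℝ (fun p : (Fin n → ℝ) × (Fin (n - 1) → ℝ) =>
        gammaFull n γ1 p.2 ⟨k, hk⟩) (r, γrest) := by
    intro k hk
    by_cases h0 : k = 0
    · subst h0; simp only [gammaFull, dif_pos rfl]; exact differentiableAt_const _
    · simp only [gammaFull, dif_neg h0]
      exact hb2 _
  have hdiag : ∀ (k : ℕ) (hk : k < n),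
      DifferentiableAt ℝ (fun p => (granPhi n W ρ γ1 p).1 ⟨k, hk⟩) (r, γrest) := by
    intro k hk
    simp only [granPhi_fst n hn W ρ γ1 _ k hk]
    have e1 : DifferentiableAt ℝ (fun p : (Fin n → ℝ) × (Fin (n - 1) → ℝ) =>
        (if k = 0 then p.1 ⟨0, by omega⟩ ^ ((1:ℝ)/3)
         else (p.1 ⟨k - 1, by omega⟩ * p.1 ⟨k, hk⟩ /
           (p.1 ⟨k - 1, by omega⟩ + p.1 ⟨k, hk⟩)) ^ ((1:ℝ)/3))) (r, γrest) := by
      by_cases h0 : k = 0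
      · simp only [if_pos h0]; exact hrt 0 _ _
      · simp only [if_neg h0]; exact hqd _ _ _ _
    have e2 : DifferentiableAt ℝ (fun p : (Fin n → ℝ) × (Fin (n - 1) → ℝ) =>
        (if h : k = n - 1 then p.1 ⟨n - 1, by omega⟩ ^ ((1:ℝ)/3)
         else (p.1 ⟨k, hk⟩ * p.1 ⟨k + 1, by omega⟩ /
           (p.1 ⟨k, hk⟩ + p.1 ⟨k + 1, by omega⟩)) ^ ((1:ℝ)/3))) (r, γrest) := by
      by_cases h2 : k = n - 1
      · simp only [dif_pos h2]; exact hrt _ _ _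
      · simp only [dif_neg h2]; exact hqd _ _ _ _
    have e3 : DifferentiableAt ℝ (fun p : (Fin n → ℝ) × (Fin (n - 1) → ℝ) =>
        4 / 3 * Real.pi * ρ * p.1 ⟨k, hk⟩ ^ (3:ℕ)) (r, γrest) :=
      ((hb1 k hk).pow 3).const_mul _
    exact hdiv (((e1.add e2).const_mul W).add (hgam k hk)) e3
      (show 4 / 3 * Real.pi * ρ * r ⟨k, hk⟩ ^ (3:ℕ) ≠ 0 by have := hr ⟨k, hk⟩; positivity)
  have hoff : ∀ (t : Fin (n - 1)),
      DifferentiableAt ℝ (fun p => (granPhi n W ρ γ1 p).2 t) (r, γrest) := by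
    intro t
    have ht := t.isLt
    have ht1 : (t:ℕ) < n := by omega
    have ht2 : (t:ℕ) + 1 < n := by omega
    simp only [granPhi_snd n hn W ρ γ1 _ t]
    have e1 : DifferentiableAt ℝ (fun p : (Fin n → ℝ) × (Fin (n - 1) → ℝ) =>
        -(W * (p.1 ⟨t, ht1⟩ * p.1 ⟨(t:ℕ)+1, ht2⟩ /
          (p.1 ⟨t, ht1⟩ + p.1 ⟨(t:ℕ)+1, ht2⟩)) ^ ((1:ℝ)/3))) (r, γrest) :=
      ((hqd _ ht1 _ ht2).const_mul W).neg
    have e2 : DifferentiableAt ℝ (fun p : (Fin n → ℝ) × (Fin (n - 1) → ℝ) =>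
        4 / 3 * Real.pi * ρ * p.1 ⟨t, ht1⟩ ^ ((3:ℝ)/2) * p.1 ⟨(t:ℕ)+1, ht2⟩ ^ ((3:ℝ)/2))
        (r, γrest) := ((hrt t ht1 _).const_mul _).mul (hrt ((t:ℕ)+1) ht2 _)
    refine hdiv e1 e2 ?_
    have h1 := hr ⟨t, ht1⟩
    have h2 := hr ⟨(t:ℕ)+1, ht2⟩
    show 4 / 3 * Real.pi * ρ * r ⟨t, ht1⟩ ^ ((3:ℝ)/2) * r ⟨(t:ℕ)+1, ht2⟩ ^ ((3:ℝ)/2) ≠ 0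
    positivity
  have hdiffΦ : DifferentiableAt ℝ (granPhi n W ρ γ1) (r, γrest) := by
    show DifferentiableAt ℝ
      (fun p => ((granPhi n W ρ γ1 p).1, (granPhi n W ρ γ1 p).2)) (r, γrest)
    exact DifferentiableAt.prodMk (differentiableAt_pi.2 fun j : Fin n => hdiag j.1 j.2)
      (differentiableAt_pi.2 fun t => hoff t)
  have hL : HasFDerivAt (granPhi n W ρ γ1)
      (fderiv ℝ (granPhi n W ρ γ1) (r, γrest)) (r, γrest) := hdiffΦ.hasFDerivAt
  obtain ⟨u, humem, hune⟩ :=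
    Submodule.exists_mem_ne_zero_of_ne_bot (LinearMap.bot_lt_ker_of_det_eq_zero hdet).ne'
  have hLu : fderiv ℝ (granPhi n W ρ γ1) (r, γrest) u = 0 := by
    simpa using LinearMap.mem_ker.mp humem
  -- directional derivatives
  have hline : HasDerivAt (fun τ : ℝ => (r, γrest) + τ • u) u 0 := by
    simpa using ((hasDerivAt_id (0:ℝ)).smul_const u).const_add (r, γrest)
  have hdirAll : HasDerivAt (fun τ : ℝ => granPhi n W ρ γ1 ((r, γrest) + τ • u))
      (fderiv ℝ (granPhi n W ρ γ1) (r, γrest) u) 0 := by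
    exact HasFDerivAt.comp_hasDerivAt_of_eq (x := 0) (hl := hL) (hf := hline) (hy := by simp)
  have hdir1 : ∀ (jv : ℕ) (hjv : jv < n) (B : ℝ),
      HasDerivAt (fun τ : ℝ => (granPhi n W ρ γ1 ((r, γrest) + τ • u)).1 ⟨jv, hjv⟩) B 0 →
      (fderiv ℝ (granPhi n W ρ γ1) (r, γrest) u).1 ⟨jv, hjv⟩ = B := by
    intro jv hjv B hB
    have h2 := ((ContinuousLinearMap.proj (R := ℝ) (φ := fun _ : Fin n => ℝ) ⟨jv, hjv⟩).comp
      (ContinuousLinearMap.fst ℝ (Fin n → ℝ) (Fin (n - 1) → ℝ))).hasFDerivAt.comp_hasDerivAt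
      0 hdirAll
    simp only [ContinuousLinearMap.coe_comp', Function.comp, ContinuousLinearMap.coe_fst',
      ContinuousLinearMap.proj_apply] at h2
    exact h2.unique hB
  have hdir2 : ∀ (t : Fin (n - 1)) (B : ℝ),
      HasDerivAt (fun τ : ℝ => (granPhi n W ρ γ1 ((r, γrest) + τ • u)).2 t) B 0 →
      (fderiv ℝ (granPhi n W ρ γ1) (r, γrest) u).2 t = B := by
    intro t B hB
    have h2 := ((ContinuousLinearMap.proj (R := ℝ) (φ := fun _ : Fin (n-1) => ℝ) t).comp
      (ContinuousLinearMap.snd ℝ (Fin n → ℝ) (Fin (n - 1) → ℝ))).hasFDerivAt.comp_hasDerivAt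
      0 hdirAll
    simp only [ContinuousLinearMap.coe_comp', Function.comp, ContinuousLinearMap.coe_snd',
      ContinuousLinearMap.proj_apply] at h2
    exact h2.unique hB
  -- the off-diagonal equations
  have hFeq : ∀ (m : ℕ) (hm : m + 1 < n), ∃ b0 b1 : ℝ, 0 < b0 ∧ 0 < b1 ∧
      b0 * u.1 ⟨m, by omega⟩ + b1 * u.1 ⟨m + 1, hm⟩ = 0 := by
    intro m hm
    have hm1 : m < n := by omega
    obtain ⟨b0, b1, hb0, hb1, hder⟩ :=
      aux_F (W := W) (c := 4/3*Real.pi*ρ) hW hc (hr ⟨m, hm1⟩) (hr ⟨m+1, hm⟩)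
    refine ⟨b0, b1, hb0, hb1, ?_⟩
    have h3 := hdir2 ⟨m, by omega⟩ (b0 * u.1 ⟨m, hm1⟩ + b1 * u.1 ⟨m+1, hm⟩) (by
      simp only [granPhi_snd n hn W ρ γ1 _ ⟨m, by omega⟩]
      simp only [Prod.fst_add, Prod.smul_fst, Pi.add_apply, Pi.smul_apply, smul_eq_mul]
      exact hder (u.1 ⟨m, hm1⟩) (u.1 ⟨m+1, hm⟩))
    rw [hLu] at h3
    simpa using h3.symm
  -- the first diagonal equation
  obtain ⟨a0, a1, ha0, ha1, hD0der⟩ :=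
    aux_D0 (W := W) (c := 4/3*Real.pi*ρ) (γ1 := γ1) hW hc hγ1
      (hr ⟨0, by omega⟩) (hr ⟨1, by omega⟩)
  have eqD0 : a0 * u.1 ⟨0, by omega⟩ + a1 * u.1 ⟨1, by omega⟩ = 0 := by
    have h3 := hdir1 0 (by omega) (a0 * u.1 ⟨0, by omega⟩ + a1 * u.1 ⟨1, by omega⟩) (by
      simp only [granPhi_fst n hn W ρ γ1 _ 0 (by omega : 0 < n)]
      simp only [if_pos rfl, dif_neg (show ¬(0 = n - 1) by omega), gammaFull, dif_pos rfl,
        Prod.fst_add, Prod.smul_fst, Pi.add_apply, Pi.smul_apply, smul_eq_mul]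
      exact hD0der (u.1 ⟨0, by omega⟩) (u.1 ⟨1, by omega⟩))
    rw [hLu] at h3
    simpa using h3.symm
  -- the radii directions vanish
  have hv : ∀ (k : ℕ) (hk : k < n), u.1 ⟨k, hk⟩ = 0 := by
    intro k
    induction k with
    | zero =>
      intro hk
      obtain ⟨b0, b1, hb0, hb1, hF0⟩ := hFeq 0 (by omega)
      have h2 : (a0 * b1 - a1 * b0) * u.1 ⟨0, hk⟩ = 0 := by
        linear_combination b1 * eqD0 - a1 * hF0
      have hne : a0 * b1 - a1 * b0 ≠ 0 := by nlinarith
      exact (mul_eq_zero.mp h2).resolve_left hne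
    | succ m ih =>
      intro hk
      obtain ⟨b0, b1, hb0, hb1, hFm⟩ := hFeq m hk
      have hm0 : u.1 ⟨m, by omega⟩ = 0 := ih (by omega)
      rw [hm0, mul_zero, zero_add] at hFm
      exact (mul_eq_zero.mp hFm).resolve_left hb1.ne'
  have hu1 : u.1 = 0 := funext fun i => hv i.1 i.2
  -- the stiffness directions vanish
  have hw : ∀ (s : Fin (n - 1)), u.2 s = 0 := by
    intro s
    have hs := s.isLt
    have hjv : (s:ℕ) + 1 < n := by omega
    have hD : (4:ℝ)/3*Real.pi*ρ * r ⟨(s:ℕ)+1, hjv⟩ ^ (3:ℕ) ≠ 0 := by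
      have := hr ⟨(s:ℕ)+1, hjv⟩; positivity
    have h3 := hdir1 ((s:ℕ)+1) hjv
      (u.2 s / (4/3*Real.pi*ρ * r ⟨(s:ℕ)+1, hjv⟩ ^ (3:ℕ))) (by
      simp only [granPhi_fst n hn W ρ γ1 _ ((s:ℕ)+1) hjv]
      simp only [hu1, Prod.fst_add, Prod.smul_fst, Prod.snd_add, Prod.smul_snd, smul_zero,
        add_zero, gammaFull, dif_neg (show ¬((s:ℕ)+1 = 0) by omega), Nat.add_sub_cancel,
        Pi.add_apply, Pi.smul_apply, Pi.zero_apply, smul_eq_mul, Fin.eta]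
      exact aux_lin _ _ _ _)
    rw [hLu] at h3
    simp only [Prod.fst_zero, Pi.zero_apply] at h3
    exact ((div_eq_zero_iff.mp h3.symm).resolve_right hD)
  exact hune (Prod.ext hu1 (funext hw))
end
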